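/- Let T = cS, where c ∈ (Σ ∪ Π)∖{$} and S is a p-string of length n ≥ 1 ending with $, with $ occurring nowhere else in S. For 1 ≤ p < q ≤ n, lcp∞(⟨T_p⟩, ⟨T_q⟩) = lcp∞(⟨S_p⟩, ⟨S_q⟩). -/

import Mathlib

/-! Common framework: parameterized strings over static alphabet `σ` and
parameter alphabet `π`.  A p-string is a `List (σ ⊕ π)`. -/

variable {σ π : Type*}

instance instInhabSum [Inhabited σ] : Inhabited (σ ⊕ π) := ⟨Sum.inl default⟩

/-- one right rotation: the last character moves to the front -/
def rotR1 {α : Type*} (W : List α) : List α := W.rotate (W.length - 1)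

/-- `rotR W i` is the `i`-th right rotation `Rot(W, i)` -/
def rotR {α : Type*} (W : List α) : ℕ → List α
  | 0 => W
  | i + 1 => rotR1 (rotR W i)

/-- 1-based access `W[i]` (junk default outside the range) -/
def get1 {α : Type*} [Inhabited α] (W : List α) (i : ℕ) : α := W.getD (i - 1) default

/-- the prev-encoding `⟨T⟩`, a list over `σ ⊕ ℕ∞` -/
def prevEnc [DecidableEq σ] [DecidableEq π] (T : List (σ ⊕ π)) : List (σ ⊕ ℕ∞) :=
  (List.range T.length).map fun k =>
    match T[k]? with
    | none => Sum.inr ⊤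
    | some (Sum.inl a) => Sum.inl a
    | some (Sum.inr b) =>
      match ((List.range k).filter fun j => T[j]? = some (Sum.inr b)).max? with
      | none => Sum.inr ⊤
      | some j => Sum.inr ((k - j : ℕ) : ℕ∞)

/-- number of distinct parameter characters occurring in `W` -/
def distinctParams [DecidableEq π] (W : List (σ ⊕ π)) : ℕ :=
  (W.filterMap Sum.getRight?).dedup.length

/-- the encoding `⟦T⟧`, a list over `σ ⊕ ℕ`:  a static character is kept; a
parameter character at (1-based) position `i` is replaced by the number of
distinct parameter characters in `Rot(T, n-i)[1:ℓ]` where `ℓ` is the leftmost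
occurrence position of `T[i]` in `Rot(T, n-i)`. -/
def encodeE [DecidableEq σ] [DecidableEq π] (T : List (σ ⊕ π)) : List (σ ⊕ ℕ) :=
  (List.range T.length).map fun k =>
    match T[k]? with
    | none => Sum.inr 0
    | some (Sum.inl a) => Sum.inl a
    | some (Sum.inr b) =>
      let R := rotR T (T.length - (k + 1))
      Sum.inr (distinctParams (R.take (R.idxOf (Sum.inr b) + 1)))

/-- order on prev-encoding characters: every static character is smaller than
every element of `ℕ∞` (and `ℕ∞` carries its usual order with `∞` on top) -/
def pvlt [LT σ] : (σ ⊕ ℕ∞) → (σ ⊕ ℕ∞) → Prop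
  | Sum.inl a, Sum.inl b => a < b
  | Sum.inl _, Sum.inr _ => True
  | Sum.inr _, Sum.inl _ => False
  | Sum.inr x, Sum.inr y => x < y

/-- `T` is a p-string of length ≥ 1 ending with the static character `d`,
which occurs nowhere else in `T`. -/
def EndsWith [DecidableEq σ] [DecidableEq π] (T : List (σ ⊕ π)) (d : σ) : Prop :=
  1 ≤ T.length ∧ T.getLast? = some (Sum.inl d) ∧ T.count (Sum.inl d) = 1

/-- `RA` represents the parameterized rotation array `RA_T` (0-based indices:
`RA_T[i] = (RA ⟨i-1⟩).val + 1`): the prev-encodings of the rotations are listed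
in strictly increasing lexicographic order. -/
def IsRA [LinearOrder σ] [DecidableEq π] (T : List (σ ⊕ π))
    (RA : Fin T.length ≃ Fin T.length) : Prop :=
  ∀ i j : Fin T.length, i < j →
    List.Lex pvlt (prevEnc (rotR T ((RA i).val + 1))) (prevEnc (rotR T ((RA j).val + 1)))

/-- `LF` represents the LF mapping: `LF_T(i) = j` iff `T_{RA_T[i]+1} = T_{RA_T[j]}`. -/
def IsLF [LinearOrder σ] [DecidableEq π] (T : List (σ ⊕ π))
    (RA LF : Fin T.length ≃ Fin T.length) : Prop :=
  ∀ i : Fin T.length, rotR T ((RA i).val + 2) = rotR T ((RA (LF i)).val + 1)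

/-- the pBWT array `L_T[i] = ⟦T_{RA_T[i]}⟧[n]` -/
def Larr [LinearOrder σ] [DecidableEq π] [Inhabited σ] (T : List (σ ⊕ π))
    (RA : Fin T.length ≃ Fin T.length) (i : Fin T.length) : σ ⊕ ℕ :=
  get1 (encodeE (rotR T ((RA i).val + 1))) T.length

/-- the array `F_T[i] = ⟦T_{RA_T[i]}⟧[1]` -/
def Farr [LinearOrder σ] [DecidableEq π] [Inhabited σ] (T : List (σ ⊕ π))
    (RA : Fin T.length ≃ Fin T.length) (i : Fin T.length) : σ ⊕ ℕ :=
  get1 (encodeE (rotR T ((RA i).val + 1))) 1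

/-- longest common prefix of two lists -/
def lcp {α : Type*} [DecidableEq α] : List α → List α → List α
  | a :: as, b :: bs => if a = b then a :: lcp as bs else []
  | _, _ => []

/-- `lcp∞(X, Y)`: the number of `∞`'s in the longest common prefix of `X` and `Y` -/
def lcpInf [DecidableEq σ] (X Y : List (σ ⊕ ℕ∞)) : ℕ :=
  (lcp X Y).count (Sum.inr ⊤)

/-- the `∞`-LCP array (1-based): `LCP∞_T[i] = lcp∞(⟨T_{RA_T[i]}⟩, ⟨T_{RA_T[i+1]}⟩)`
for `1 ≤ i < n`, and `0` otherwise. -/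
def LCPa [LinearOrder σ] [DecidableEq π] (T : List (σ ⊕ π))
    (RA : Fin T.length ≃ Fin T.length) (i : ℕ) : ℕ :=
  if h : 1 ≤ i ∧ i < T.length then
    lcpInf (prevEnc (rotR T ((RA ⟨i - 1, by omega⟩).val + 1)))
           (prevEnc (rotR T ((RA ⟨i, h.2⟩).val + 1)))
  else 0

/-- parameterized match: a bijection on `σ ⊕ π` fixing all static characters
renames `S` into `T` -/
def PMatch (S T : List (σ ⊕ π)) : Prop :=
  ∃ f : (σ ⊕ π) ≃ (σ ⊕ π), (∀ a : σ, f (Sum.inl a) = Sum.inl a) ∧ S.map f = T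

/-- leftmost (1-based) occurrence position of `c` in `W`, `0` if absent -/
def leftPos [DecidableEq σ] [DecidableEq π] (W : List (σ ⊕ π)) (c : σ ⊕ π) : ℕ :=
  if W.contains c then W.idxOf c + 1 else 0

/-- rightmost (1-based) occurrence position of `c` in `W`, `0` if absent -/
def rightPos [DecidableEq σ] [DecidableEq π] (W : List (σ ⊕ π)) (c : σ ⊕ π) : ℕ :=
  if W.contains c then W.length - W.reverse.idxOf c else 0


section AuxLemmas

lemma lcp_nil_left {α : Type*} [DecidableEq α] (Y : List α) : lcp ([] : List α) Y = [] := by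
  cases Y <;> rfl

lemma lcp_nil_right {α : Type*} [DecidableEq α] (X : List α) : lcp X ([] : List α) = [] := by
  cases X <;> rfl

lemma lcp_take {α : Type*} [DecidableEq α] (X Y : List α) (m : ℕ) :
    lcp (X.take m) (Y.take m) = (lcp X Y).take m := by
  induction X generalizing Y m with
  | nil => simp [lcp_nil_left]
  | cons a as ih =>
    cases Y with
    | nil => simp [lcp_nil_right]
    | cons b bs =>
      cases m with
      | zero => simp [lcp_nil_left]
      | succ m =>
        by_cases h : a = b
        · simp [lcp, h, ih]
        · simp [lcp, h]

lemma lcp_length_le {α : Type*} [DecidableEq α] (X Y : List α) (k : ℕ)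
    (h : X[k]? ≠ Y[k]?) : (lcp X Y).length ≤ k := by
  induction X generalizing Y k with
  | nil => simp [lcp_nil_left]
  | cons a as ih =>
    cases Y with
    | nil => simp [lcp_nil_right]
    | cons b bs =>
      cases k with
      | zero =>
        have : a ≠ b := by simpa using h
        simp [lcp, this]
      | succ k =>
        by_cases hab : a = b
        · simp only [lcp, if_pos hab, List.length_cons, Nat.succ_le_succ_iff]
          exact ih bs k (by simpa using h)
        · simp [lcp, hab]

lemma lcp_eq_of_take {α : Type*} [DecidableEq α] (X Y X' Y' : List α) (m k : ℕ)
    (hkm : k < m)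
    (hX : X.take m = X'.take m) (hY : Y.take m = Y'.take m)
    (hne : X[k]? ≠ Y[k]?) :
    lcp X Y = lcp X' Y' := by
  have hgX : X'[k]? = X[k]? := by
    have hA : (X'.take m)[k]? = X'[k]? := by simp [List.getElem?_take, hkm]
    have hB : (X.take m)[k]? = X[k]? := by simp [List.getElem?_take, hkm]
    rw [← hA, ← hX, hB]
  have hgY : Y'[k]? = Y[k]? := by
    have hA : (Y'.take m)[k]? = Y'[k]? := by simp [List.getElem?_take, hkm]
    have hB : (Y.take m)[k]? = Y[k]? := by simp [List.getElem?_take, hkm]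
    rw [← hA, ← hY, hB]
  have hne' : X'[k]? ≠ Y'[k]? := by rw [hgX, hgY]; exact hne
  have l1 := lcp_length_le X Y k hne
  have l2 := lcp_length_le X' Y' k hne'
  calc lcp X Y = (lcp X Y).take m := (List.take_of_length_le (by omega)).symm
    _ = lcp (X.take m) (Y.take m) := (lcp_take X Y m).symm
    _ = lcp (X'.take m) (Y'.take m) := by rw [hX, hY]
    _ = (lcp X' Y').take m := lcp_take X' Y' m
    _ = lcp X' Y' := List.take_of_length_le (by omega)

lemma rotR_eq {α : Type*} (W : List α) (i : ℕ) :
    rotR W i = W.rotate (i * (W.length - 1)) := by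
  induction i with
  | zero => simp [rotR]
  | succ i ih =>
    simp only [rotR, rotR1, ih, List.rotate_rotate, List.length_rotate]
    congr 1
    ring

lemma rotR_length {α : Type*} (W : List α) (i : ℕ) :
    (rotR W i).length = W.length := by
  rw [rotR_eq, List.length_rotate]

lemma rotR_eq_drop_take {α : Type*} (W : List α) (p : ℕ) (h1 : 1 ≤ p) (h2 : p ≤ W.length) :
    rotR W p = W.drop (W.length - p) ++ W.take (W.length - p) := by
  rw [rotR_eq, ← List.rotate_mod]
  have hmod : p * (W.length - 1) % W.length = W.length - p := by
    obtain ⟨p', rfl⟩ : ∃ p', p = p' + 1 := ⟨p - 1, by omega⟩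
    obtain ⟨L', hL⟩ : ∃ L', W.length = p' + 1 + L' := ⟨W.length - (p' + 1), by omega⟩
    rw [hL]
    have h1' : p' + 1 + L' - 1 = p' + L' := by omega
    have h2' : p' + 1 + L' - (p' + 1) = L' := by omega
    rw [h1', h2']
    have key : (p' + 1) * (p' + L') = L' + p' * (p' + 1 + L') := by ring
    rw [key, Nat.add_mul_mod_self_right, Nat.mod_eq_of_lt (by omega)]
  rw [hmod]
  exact List.rotate_eq_drop_append_take (by omega)

lemma prevEnc_length' [DecidableEq σ] [DecidableEq π] (T : List (σ ⊕ π)) :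
    (prevEnc T).length = T.length := by simp [prevEnc]

lemma prevEnc_getElem? [DecidableEq σ] [DecidableEq π] (T : List (σ ⊕ π)) (k : ℕ)
    (hk : k < T.length) :
    (prevEnc T)[k]? = some (match T[k]? with
    | none => Sum.inr ⊤
    | some (Sum.inl a) => Sum.inl a
    | some (Sum.inr b) =>
      match ((List.range k).filter fun j => T[j]? = some (Sum.inr b)).max? with
      | none => Sum.inr ⊤
      | some j => Sum.inr ((k - j : ℕ) : ℕ∞)) := by
  simp only [prevEnc, List.getElem?_map, List.getElem?_range hk]
  rfl

lemma prevEnc_getElem?_inl [DecidableEq σ] [DecidableEq π] (T : List (σ ⊕ π)) (k : ℕ)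
    (hk : k < T.length) (a : σ) (h : T[k]? = some (Sum.inl a)) :
    (prevEnc T)[k]? = some (Sum.inl a) := by
  rw [prevEnc_getElem? T k hk]
  have : T[k]? = some (Sum.inl a) := h
  rw [this]

lemma prevEnc_getElem?_inr [DecidableEq σ] [DecidableEq π] (T : List (σ ⊕ π)) (k : ℕ)
    (hk : k < T.length) (b : π) (h : T[k]? = some (Sum.inr b)) :
    ∃ v : ℕ∞, (prevEnc T)[k]? = some (Sum.inr v) := by
  rw [prevEnc_getElem? T k hk]
  have : T[k]? = some (Sum.inr b) := h
  rw [this]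
  dsimp only
  cases hm : ((List.range k).filter fun j => decide (T[j]? = some (Sum.inr b))).max? with
  | none => exact ⟨⊤, rfl⟩
  | some j => exact ⟨_, rfl⟩

lemma prevEnc_take [DecidableEq σ] [DecidableEq π] (X Y : List (σ ⊕ π)) (m : ℕ)
    (hmX : m ≤ X.length) (hmY : m ≤ Y.length) (h : X.take m = Y.take m) :
    (prevEnc X).take m = (prevEnc Y).take m := by
  have hget : ∀ j < m, X[j]? = Y[j]? := by
    intro j hj
    have hA : (X.take m)[j]? = X[j]? := by simp [List.getElem?_take, hj]
    have hB : (Y.take m)[j]? = Y[j]? := by simp [List.getElem?_take, hj]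
    rw [← hA, ← hB, h]
  apply List.ext_getElem?
  intro k
  by_cases hk : k < m
  · rw [List.getElem?_take, List.getElem?_take, if_pos hk, if_pos hk,
      prevEnc_getElem? X k (by omega), prevEnc_getElem? Y k (by omega)]
    congr 1
    rw [hget k hk]
    cases hYk : Y[k]? with
    | none => rfl
    | some e =>
      cases e with
      | inl a => rfl
      | inr b =>
        have hfil : ((List.range k).filter fun j => X[j]? = some (Sum.inr b))
            = ((List.range k).filter fun j => Y[j]? = some (Sum.inr b)) := by
          apply List.filter_congr
          intro j hj
          rw [List.mem_range] at hj
          rw [hget j (by omega)]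
        dsimp only
        rw [hfil]
  · rw [List.getElem?_take, List.getElem?_take, if_neg hk, if_neg hk]

instance sumLawfulBEq {σ π : Type*} [DecidableEq σ] [DecidableEq π] : LawfulBEq (σ ⊕ π) where
  eq_of_beq := by
    intro a b h
    cases a <;> cases b
    · rw [show ∀ x y : σ, ((Sum.inl x : σ ⊕ π) == Sum.inl y) = (x == y) from fun _ _ => rfl] at h
      rw [eq_of_beq h]
    · exact absurd h (by rw [show ((Sum.inl _ : σ ⊕ π) == Sum.inr _) = false from rfl]; simp)
    · exact absurd h (by rw [show ((Sum.inr _ : σ ⊕ π) == Sum.inl _) = false from rfl]; simp)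
    · rw [show ∀ x y : π, ((Sum.inr x : σ ⊕ π) == Sum.inr y) = (x == y) from fun _ _ => rfl] at h
      rw [eq_of_beq h]
  rfl := by
    intro a
    cases a
    · rw [show ∀ x y : σ, ((Sum.inl x : σ ⊕ π) == Sum.inl y) = (x == y) from fun _ _ => rfl]
      simp
    · rw [show ∀ x y : π, ((Sum.inr x : σ ⊕ π) == Sum.inr y) = (x == y) from fun _ _ => rfl]
      simp

lemma count_two_of_getElem? {α : Type*} [BEq α] [LawfulBEq α] {l : List α} {a : α} {i j : ℕ}
    (hij : i < j) (hi : l[i]? = some a) (hj : l[j]? = some a) : 2 ≤ l.count a := by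
  have hjl : j < l.length := by
    by_contra hcon
    rw [List.getElem?_eq_none (by omega)] at hj
    exact absurd hj (by simp)
  have hsplit : l.take j ++ l.drop j = l := List.take_append_drop j l
  have h1 : a ∈ l.take j := by
    apply List.mem_of_getElem? (i := i)
    rw [List.getElem?_take, if_pos hij]
    exact hi
  have h2 : a ∈ l.drop j := by
    apply List.mem_of_getElem? (i := 0)
    rw [List.getElem?_drop]
    simpa using hj
  have c1 : 1 ≤ (l.take j).count a := List.count_pos_iff.mpr h1
  have c2 : 1 ≤ (l.drop j).count a := List.count_pos_iff.mpr h2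
  calc 2 ≤ (l.take j).count a + (l.drop j).count a := by omega
    _ = (l.take j ++ l.drop j).count a := List.count_append.symm
    _ = l.count a := by rw [hsplit]

end AuxLemmas

/-- Let `T = cS` with `c ∈ (Σ ∪ Π) ∖ {$}`.  For `1 ≤ p < q ≤ n`,
`lcp∞(⟨T_p⟩, ⟨T_q⟩) = lcp∞(⟨S_p⟩, ⟨S_q⟩)`. -/
theorem lcpInf_cons [LinearOrder σ] [DecidableEq π]
    (d : σ) (hd : ∀ a : σ, d ≤ a)
    (S : List (σ ⊕ π)) (hS : EndsWith S d)
    (c : σ ⊕ π) (hc : c ≠ Sum.inl d)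
    (p q : ℕ) (h1 : 1 ≤ p) (h2 : p < q) (h3 : q ≤ S.length) :
    lcpInf (prevEnc (rotR (c :: S) p)) (prevEnc (rotR (c :: S) q))
      = lcpInf (prevEnc (rotR S p)) (prevEnc (rotR S q)) := by
  obtain ⟨hn, hlast, hcount⟩ := hS
  set n := S.length with hnn
  have hlast' : S[n - 1]? = some (Sum.inl d) := by
    rw [← List.getLast?_eq_getElem?]; exact hlast
  have huniq : ∀ j, j ≠ n - 1 → S[j]? ≠ some (Sum.inl d) := by
    intro j hjne hcon
    have h2c : 2 ≤ S.count (Sum.inl d) := by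
      rcases lt_or_gt_of_ne hjne with h | h
      · exact count_two_of_getElem? h hcon hlast'
      · exact count_two_of_getElem? h hlast' hcon
    omega
  -- rotation formulas
  have hTlen : (c :: S).length = n + 1 := by simp [hnn]
  have hTp : rotR (c :: S) p = S.drop (n - p) ++ c :: S.take (n - p) := by
    rw [rotR_eq_drop_take (c :: S) p h1 (by rw [hTlen]; omega)]
    have he : (c :: S).length - p = (n - p) + 1 := by rw [hTlen]; omega
    rw [he]
    simp [List.drop_succ_cons, List.take_succ_cons]
  have hTq : rotR (c :: S) q = S.drop (n - q) ++ c :: S.take (n - q) := by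
    rw [rotR_eq_drop_take (c :: S) q (by omega) (by rw [hTlen]; omega)]
    have he : (c :: S).length - q = (n - q) + 1 := by rw [hTlen]; omega
    rw [he]
    simp [List.drop_succ_cons, List.take_succ_cons]
  have hSp : rotR S p = S.drop (n - p) ++ S.take (n - p) :=
    rotR_eq_drop_take S p h1 (by omega)
  have hSq : rotR S q = S.drop (n - q) ++ S.take (n - q) :=
    rotR_eq_drop_take S q (by omega) h3
  have hdp : (S.drop (n - p)).length = p := by simp; omega
  have hdq : (S.drop (n - q)).length = q := by simp; omega
  -- character-level take-p equalities
  have htp : (rotR (c :: S) p).take p = (rotR S p).take p := by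
    rw [hTp, hSp, List.take_append_of_le_length (by omega),
      List.take_append_of_le_length (by omega)]
  have htq : (rotR (c :: S) q).take p = (rotR S q).take p := by
    rw [hTq, hSq, List.take_append_of_le_length (by omega),
      List.take_append_of_le_length (by omega)]
  -- the character at index p-1
  have hXc : (rotR (c :: S) p)[p - 1]? = some (Sum.inl d) := by
    rw [hTp, List.getElem?_append, if_pos (by omega), List.getElem?_drop]
    have he : n - p + (p - 1) = n - 1 := by omega
    rw [he]; exact hlast'
  have hidx : n - q + (p - 1) ≠ n - 1 := by omega
  have hidxlt : n - q + (p - 1) < n := by omega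
  have hYc : ∃ e, (rotR (c :: S) q)[p - 1]? = some e ∧ e ≠ Sum.inl d := by
    rw [hTq, List.getElem?_append, if_pos (by omega), List.getElem?_drop]
    refine ⟨S[n - q + (p - 1)], List.getElem?_eq_getElem hidxlt, ?_⟩
    intro hcon
    exact huniq _ hidx (by rw [List.getElem?_eq_getElem hidxlt, hcon])
  -- prevEnc at index p-1
  have hlenTp : p - 1 < (rotR (c :: S) p).length := by rw [rotR_length, hTlen]; omega
  have hlenTq : p - 1 < (rotR (c :: S) q).length := by rw [rotR_length, hTlen]; omega
  have hXg : (prevEnc (rotR (c :: S) p))[p - 1]? = some (Sum.inl d) :=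
    prevEnc_getElem?_inl _ _ hlenTp d hXc
  obtain ⟨e, hYe, hed⟩ := hYc
  have hne : (prevEnc (rotR (c :: S) p))[p - 1]? ≠ (prevEnc (rotR (c :: S) q))[p - 1]? := by
    rw [hXg]
    cases e with
    | inl a =>
      rw [prevEnc_getElem?_inl _ _ hlenTq a hYe]
      intro hcon
      exact hed (by injection hcon with h'; rw [Sum.inl.injEq] at h'; rw [h'])
    | inr b =>
      obtain ⟨v, hv⟩ := prevEnc_getElem?_inr _ _ hlenTq b hYe
      rw [hv]
      intro hcon
      exact absurd hcon (by simp)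
  -- prevEnc take-p equalities
  have hpeP : (prevEnc (rotR (c :: S) p)).take p = (prevEnc (rotR S p)).take p :=
    prevEnc_take _ _ p (by rw [rotR_length, hTlen]; omega) (by rw [rotR_length]; omega) htp
  have hpeQ : (prevEnc (rotR (c :: S) q)).take p = (prevEnc (rotR S q)).take p :=
    prevEnc_take _ _ p (by rw [rotR_length, hTlen]; omega) (by rw [rotR_length]; omega) htq
  unfold lcpInf
  rw [lcp_eq_of_take _ _ _ _ p (p - 1) (by omega) hpeP hpeQ hne]
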